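/- Let ρ ∈ E be nonzero and let K > 0. Then there exist C > 0 and θ₀ ∈ (0,1) such that for every θ ∈ (0, θ₀] and all vectors a, b ∈ E satisfying ‖a‖ ≥ θ^{−2}, ‖a − b‖ ≤ K, and ∠(a, ρ) ≤ θ, one has |cos ∠(b, ρ) − cos ∠(a, ρ)| ≤ C·θ/‖a‖ (note that b ≠ 0 under these hypotheses, so ∠(b, ρ) is defined). -/

import Mathlib

open RealInnerProductSpace

set_option maxHeartbeats 1000000 in
/-- If `ρ ≠ 0` and `K > 0`, then there are `C > 0` and `θ₀ ∈ (0,1)` such that for all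
`θ ∈ (0, θ₀]` and all `a, b` with `‖a‖ ≥ θ⁻²`, `‖a - b‖ ≤ K` and `∠(a,ρ) ≤ θ`, one has
`|cos ∠(b,ρ) − cos ∠(a,ρ)| ≤ Cθ/‖a‖`. -/
theorem cos_angle_sub_approx {E : Type*} [NormedAddCommGroup E]
    [InnerProductSpace ℝ E] [FiniteDimensional ℝ E]
    (ρ : E) (hρ : ρ ≠ 0) (K : ℝ) (hK : 0 < K) :
    ∃ C > (0 : ℝ), ∃ θ₀ ∈ Set.Ioo (0 : ℝ) 1, ∀ θ ∈ Set.Ioc (0 : ℝ) θ₀, ∀ a b : E,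
      θ ^ (-2 : ℤ) ≤ ‖a‖ → ‖a - b‖ ≤ K → InnerProductGeometry.angle a ρ ≤ θ →
      |Real.cos (InnerProductGeometry.angle b ρ) -
          Real.cos (InnerProductGeometry.angle a ρ)| ≤ C * θ / ‖a‖ := by
  refine ⟨2*K^2 + 2*K, by positivity, min (1/2) (1/(2*K)),
    ⟨lt_min (by norm_num) (by positivity), (min_le_left _ _).trans_lt (by norm_num)⟩, ?_⟩
  rintro θ ⟨hθ0, hθ1⟩ a b hna hab hang
  have hθhalf : θ ≤ 1/2 := hθ1.trans (min_le_left _ _)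
  have hθK : θ ≤ 1/(2*K) := hθ1.trans (min_le_right _ _)
  have hθ1' : θ ≤ 1 := hθhalf.trans (by norm_num)
  have hr : (0:ℝ) < ‖ρ‖ := norm_pos_iff.mpr hρ
  have hθsq : (θ^2)⁻¹ ≤ ‖a‖ := by
    rwa [show (-2:ℤ) = -(2:ℕ) by norm_num, zpow_neg, zpow_natCast] at hna
  have ha_pos : (0:ℝ) < ‖a‖ := lt_of_lt_of_le (by positivity) hθsq
  have hθsq_le : θ^2 ≤ 1/(2*K) := by nlinarith
  have h2K : 2*K ≤ ‖a‖ := by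
    have h := one_div_le_one_div_of_le (by positivity : (0:ℝ) < θ^2) hθsq_le
    rw [one_div_one_div] at h
    calc 2*K ≤ 1/θ^2 := h
      _ ≤ ‖a‖ := by rw [one_div]; exact hθsq
  have hb2 : ‖a‖/2 ≤ ‖b‖ := by
    have h := norm_sub_norm_le a b
    linarith
  have hb_pos : (0:ℝ) < ‖b‖ := by linarith
  have hd : ‖b - a‖ ≤ K := by rwa [norm_sub_rev] at hab
  -- sine bound
  have hang0 := InnerProductGeometry.angle_nonneg a ρ
  have hsin0 : 0 ≤ Real.sin (InnerProductGeometry.angle a ρ) :=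
    Real.sin_nonneg_of_nonneg_of_le_pi hang0 (InnerProductGeometry.angle_le_pi a ρ)
  have hsin : Real.sin (InnerProductGeometry.angle a ρ) ≤ θ :=
    (Real.sin_le hang0).trans hang
  -- orthogonal decomposition of ρ along a
  set w : E := ρ - (⟪a,ρ⟫/‖a‖^2) • a with hw_def
  have hna0 : ‖a‖ ≠ 0 := ne_of_gt ha_pos
  have hww : ⟪w,w⟫ = ‖ρ‖^2 - ⟪a,ρ⟫^2/‖a‖^2 := by
    simp only [hw_def, inner_sub_left, inner_sub_right, real_inner_smul_left,
      real_inner_smul_right]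
    rw [real_inner_comm ρ a]
    simp only [real_inner_self_eq_norm_sq]
    field_simp
    ring
  have hw2 : ‖w‖^2 = ‖ρ‖^2 * (Real.sin (InnerProductGeometry.angle a ρ))^2 := by
    rw [← real_inner_self_eq_norm_sq, hww, Real.sin_sq, InnerProductGeometry.cos_angle]
    field_simp
  have hwle : ‖w‖ ≤ θ * ‖ρ‖ := by
    have hs2 : Real.sin (InnerProductGeometry.angle a ρ)^2 ≤ θ^2 :=
      pow_le_pow_left₀ hsin0 hsin 2
    have hsq : ‖w‖^2 ≤ (θ * ‖ρ‖)^2 := by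
      rw [hw2]
      nlinarith [sq_nonneg ‖ρ‖]
    exact le_of_pow_le_pow_left₀ two_ne_zero (by positivity) hsq
  -- inner product identities
  have hip : ⟪a, b-a⟫ = (‖b‖^2 - ‖a‖^2 - ‖b-a‖^2)/2 := by
    have h := norm_add_sq_real a (b-a)
    rw [add_sub_cancel] at h
    linarith
  have hdecomp : ⟪b-a, ρ⟫ = (⟪a,ρ⟫/‖a‖^2) * ⟪b-a, a⟫ + ⟪b-a, w⟫ := by
    simp only [hw_def, inner_sub_right, real_inner_smul_right]
    ring
  have hM : ‖a‖*⟪b,ρ⟫ - ‖b‖*⟪a,ρ⟫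
      = ⟪a,ρ⟫ * (((‖b‖-‖a‖)^2 - ‖b-a‖^2)/(2*‖a‖)) + ‖a‖ * ⟪b-a, w⟫ := by
    have he : ⟪b,ρ⟫ = ⟪a,ρ⟫ + ⟪b-a,ρ⟫ := by rw [inner_sub_left]; ring
    have hip' : ⟪b-a, a⟫ = (‖b‖^2 - ‖a‖^2 - ‖b-a‖^2)/2 := by
      rw [real_inner_comm]; exact hip
    rw [he, hdecomp, hip']
    field_simp
    ring
  -- bound the numerator
  have hnum : |(‖b‖-‖a‖)^2 - ‖b-a‖^2| ≤ K^2 := by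
    have hx := abs_norm_sub_norm_le b a
    have hx' := abs_le.mp hx
    have hsq : (‖b‖-‖a‖)^2 ≤ ‖b-a‖^2 := sq_le_sq' (by linarith [hx'.1]) hx'.2
    rw [abs_of_nonpos (by linarith)]
    nlinarith [sq_nonneg (‖b‖-‖a‖), norm_nonneg (b-a)]
  have h1 : |⟪a,ρ⟫ * (((‖b‖-‖a‖)^2 - ‖b-a‖^2)/(2*‖a‖))| ≤ ‖ρ‖*K^2 := by
    rw [abs_mul]
    calc |⟪a,ρ⟫| * |((‖b‖-‖a‖)^2 - ‖b-a‖^2)/(2*‖a‖)|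
        ≤ (‖a‖*‖ρ‖) * (K^2/(2*‖a‖)) := by
          apply mul_le_mul (abs_real_inner_le_norm a ρ) ?_ (abs_nonneg _) (by positivity)
          rw [abs_div, abs_of_pos (by positivity : (0:ℝ) < 2*‖a‖)]
          gcongr
      _ = ‖ρ‖*K^2/2 := by field_simp
      _ ≤ ‖ρ‖*K^2 := by nlinarith [mul_nonneg hr.le (sq_nonneg K)]
  have hiww : |⟪b-a, w⟫| ≤ K*(θ*‖ρ‖) :=
    le_trans (abs_real_inner_le_norm _ _) (mul_le_mul hd hwle (norm_nonneg _) hK.le)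
  have h2 : |‖a‖ * ⟪b-a, w⟫| ≤ K*θ*‖ρ‖*‖a‖ := by
    rw [abs_mul, abs_of_pos ha_pos]
    calc ‖a‖ * |⟪b-a, w⟫| ≤ ‖a‖ * (K*(θ*‖ρ‖)) := by
          exact mul_le_mul_of_nonneg_left hiww ha_pos.le
      _ = K*θ*‖ρ‖*‖a‖ := by ring
  have hMabs : |‖a‖*⟪b,ρ⟫ - ‖b‖*⟪a,ρ⟫| ≤ ‖ρ‖*K^2 + K*θ*‖ρ‖*‖a‖ := by
    rw [hM]
    exact (abs_add_le _ _).trans (add_le_add h1 h2)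
  -- final assembly
  rw [InnerProductGeometry.cos_angle, InnerProductGeometry.cos_angle]
  have key : ⟪b,ρ⟫/(‖b‖*‖ρ‖) - ⟪a,ρ⟫/(‖a‖*‖ρ‖)
      = (‖a‖*⟪b,ρ⟫ - ‖b‖*⟪a,ρ⟫)/(‖a‖*‖b‖*‖ρ‖) := by
    field_simp
  rw [key, abs_div, abs_of_pos (by positivity : (0:ℝ) < ‖a‖*‖b‖*‖ρ‖)]
  rw [div_le_div_iff₀ (by positivity) ha_pos]
  have hθna : 1 ≤ θ * ‖a‖ := by
    have h1 : θ^2 * (θ^2)⁻¹ = 1 := mul_inv_cancel₀ (by positivity)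
    have h2 : θ^2 * (θ^2)⁻¹ ≤ θ^2 * ‖a‖ := by
      exact mul_le_mul_of_nonneg_left hθsq (by positivity)
    nlinarith
  have hstep1 : ‖ρ‖*K^2 ≤ ‖ρ‖*K^2 * (θ*‖a‖) := le_mul_of_one_le_right (by positivity) hθna
  have hMabs2 : |‖a‖*⟪b,ρ⟫ - ‖b‖*⟪a,ρ⟫| ≤ (K^2+K)*θ*‖a‖*‖ρ‖ := by nlinarith [hMabs, hstep1]
  have hna2b : ‖a‖ ≤ 2*‖b‖ := by linarith
  calc |‖a‖*⟪b,ρ⟫ - ‖b‖*⟪a,ρ⟫| * ‖a‖ ≤ ((K^2+K)*θ*‖a‖*‖ρ‖) * ‖a‖ :=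
        mul_le_mul_of_nonneg_right hMabs2 ha_pos.le
    _ ≤ ((K^2+K)*θ*(2*‖b‖)*‖ρ‖) * ‖a‖ := by gcongr
    _ = (2*K^2 + 2*K)*θ*(‖a‖*‖b‖*‖ρ‖) := by ring
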